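/- Filtered backprojection inversion formula: For every Schwartz function f on ℝ² and every x ∈ ℝ², f(x) = ∫_0^{2π} G_f(ω(φ), x·ω(φ)) dφ, where G_f is the filtered projection of f. -/

import Mathlib

open MeasureTheory Real intervalIntegral
open scoped RealInnerProductSpace

noncomputable section

/-- The plane `ℝ²` as a Euclidean space. -/
abbrev E2 : Type := EuclideanSpace ℝ (Fin 2)

/-- The unit vector `ω(φ) = (cos φ, sin φ)`. -/
def omega (φ : ℝ) : E2 := (WithLp.equiv 2 (Fin 2 → ℝ)).symm ![Real.cos φ, Real.sin φ]

/-- The Fourier transform on `ℝ²`: `𝓕f(ξ) = ∫ e^{−i x·ξ} f(x) dx`. -/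
def FT (f : E2 → ℂ) (ξ : E2) : ℂ :=
  ∫ x : E2, Complex.exp (-(Complex.I * (⟪x, ξ⟫ : ℂ))) * f x

/-- The filtered projection `G_f(ω,p) = (1/(8π²)) ∫ e^{i p q} |q| 𝓕f(qω) dq`,
which equals `ℋℛf` by the Fourier slice theorem. -/
def filtProj (f : E2 → ℂ) (w : E2) (p : ℝ) : ℂ :=
  (1 / (8 * (π : ℂ) ^ 2)) * ∫ q : ℝ, Complex.exp (Complex.I * p * q) * (|q| : ℝ) * FT f (q • w)

namespace FBP

open FourierTransform Set

/-- The Fourier transform of `f`, as a Schwartz map. -/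
def gS (f : SchwartzMap E2 ℂ) : SchwartzMap E2 ℂ := SchwartzMap.fourierTransformCLM ℂ f

theorem FT_eq (f : SchwartzMap E2 ℂ) (ξ : E2) :
    FT ⇑f ξ = 𝓕 ⇑f ((2*π)⁻¹ • ξ) := by
  rw [Real.fourier_eq]
  unfold FT
  congr 1
  ext x
  rw [real_inner_smul_right, Circle.smul_def, Real.fourierChar_apply, smul_eq_mul]
  push_cast
  have hπ : (π:ℂ) ≠ 0 := Complex.ofReal_ne_zero.2 pi_ne_zero
  field_simp

/-- The integrand of the Fourier inversion formula, written with the Schwartz form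
of the Fourier transform. -/
def h (f : SchwartzMap E2 ℂ) (x : E2) : E2 → ℂ :=
  fun η => Complex.exp (Complex.I * (⟪η, x⟫ : ℝ)) * gS f ((2*π)⁻¹ • η)

theorem h_eq (f : SchwartzMap E2 ℂ) (x : E2) (η : E2) :
    h f x η = Complex.exp (Complex.I * (⟪η, x⟫ : ℝ)) * FT ⇑f η := by
  rw [h, FT_eq, gS, SchwartzMap.fourierTransformCLM_apply, SchwartzMap.fourier_coe]

theorem h_cont (f : SchwartzMap E2 ℂ) (x : E2) : Continuous (h f x) := by
  apply Continuous.mul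
  · exact Complex.continuous_exp.comp (continuous_const.mul
      (Complex.continuous_ofReal.comp (continuous_id.inner continuous_const)))
  · exact (gS f).continuous.comp (continuous_const_smul ((2*π)⁻¹))

theorem h_norm (f : SchwartzMap E2 ℂ) (x : E2) (η : E2) :
    ‖h f x η‖ = ‖gS f ((2*π)⁻¹ • η)‖ := by
  rw [h, norm_mul]
  have : ‖Complex.exp (Complex.I * (⟪η, x⟫ : ℝ))‖ = 1 := by
    rw [Complex.norm_exp]
    simp [Complex.mul_re]
  rw [this, one_mul]

theorem h_integrable (f : SchwartzMap E2 ℂ) (x : E2) : Integrable (h f x) := by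
  have hb : Integrable (fun η : E2 => ‖gS f ((2*π)⁻¹ • η)‖) := by
    have h2π : ((2*π)⁻¹ : ℝ) ≠ 0 := by positivity
    exact ((gS f).integrable).norm.comp_smul h2π
  exact hb.mono' (h_cont f x).aestronglyMeasurable
    (ae_of_all _ fun η => le_of_eq (h_norm f x η))

/-- Fourier inversion: the integral of `h` over the plane is `4π² f(x)`. -/
theorem inversion (f : SchwartzMap E2 ℂ) (x : E2) :
    (∫ η : E2, h f x η) = ((4 * π^2 : ℝ) : ℂ) * f x := by
  have hg : Integrable (𝓕 ⇑f) := by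
    rw [← SchwartzMap.fourier_coe, ← SchwartzMap.fourierTransformCLM_apply ℂ f]
    exact (SchwartzMap.fourierTransformCLM ℂ f).integrable
  set k : E2 → ℂ := fun ξ => 𝐞 ⟪ξ, x⟫ • 𝓕 ⇑f ξ with hk
  have h1 : ∀ η : E2, h f x η = k ((2*π)⁻¹ • η) := by
    intro η
    rw [h_eq, FT_eq, hk]
    simp only [Circle.smul_def, Real.fourierChar_apply, real_inner_smul_left, smul_eq_mul]
    have hπ : (π:ℂ) ≠ 0 := Complex.ofReal_ne_zero.2 pi_ne_zero
    push_cast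
    congr 2
    field_simp
  have h2 : (∫ η : E2, k ((2*π)⁻¹ • η))
      = |(((2*π)⁻¹ : ℝ) ^ (Module.finrank ℝ E2))⁻¹| • ∫ ξ, k ξ :=
    Measure.integral_comp_smul volume k ((2*π)⁻¹)
  have h3 : (∫ ξ, k ξ) = f x := by
    rw [hk, ← Real.fourierInv_eq]
    exact (f.integrable (μ := volume)).fourierInv_fourier_eq hg f.continuous.continuousAt
  simp only [h1]
  rw [h2, h3]
  have : |(((2*π)⁻¹ : ℝ) ^ (Module.finrank ℝ E2))⁻¹| = 4 * π ^ 2 := by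
    rw [finrank_euclideanSpace_fin]
    rw [abs_of_nonneg (by positivity)]
    field_simp
    ring
  rw [this, Complex.real_smul]

theorem omega_norm (φ : ℝ) : ‖omega φ‖ = 1 := by
  rw [EuclideanSpace.norm_eq]
  have : ∀ i : Fin 2, (omega φ) i = ![Real.cos φ, Real.sin φ] i := fun i => rfl
  simp only [this]
  rw [Fin.sum_univ_two]
  simp [sq_abs, add_comm, Real.sin_sq_add_cos_sq]

theorem omega_cont : Continuous omega := by
  have h1 : Continuous fun φ : ℝ => (![Real.cos φ, Real.sin φ] : Fin 2 → ℝ) := by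
    refine continuous_pi fun i => ?_
    fin_cases i
    · simpa using Real.continuous_cos
    · simpa using Real.continuous_sin
  exact ((EuclideanSpace.equiv (Fin 2) ℝ).symm.continuous).comp h1

theorem omega_add_pi (φ : ℝ) : omega (φ + π) = -omega φ := by
  unfold omega
  ext i
  fin_cases i <;> simp [Real.cos_add_pi, Real.sin_add_pi]

theorem omega_periodic : Function.Periodic omega (2*π) := by
  intro φ
  unfold omega
  simp [Real.cos_add_two_pi, Real.sin_add_two_pi]

/-- Uniform decay bound for the Schwartz function along lines. -/
theorem decay_bound (g : SchwartzMap E2 ℂ) :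
    ∃ M : ℝ, ∀ (w : E2), ‖w‖ = 1 → ∀ q : ℝ,
      |q| * ‖g ((((2*π)⁻¹ : ℝ) * q) • w)‖ ≤ M * ((1 + |q|) ^ (2:ℕ))⁻¹ := by
  obtain ⟨C0, hC0⟩ := g.decay 0 0
  obtain ⟨C3, hC3⟩ := g.decay 3 0
  simp only [pow_zero, one_mul, norm_iteratedFDeriv_zero] at hC0 hC3
  refine ⟨4*C0 + 4*((2*π)^3*C3), fun w hw q => ?_⟩
  have hc : (0:ℝ) < (2*π)⁻¹ := by positivity
  have hnorm : ‖(((2*π)⁻¹ * q) : ℝ) • w‖ = (2*π)⁻¹ * |q| := by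
    rw [norm_smul, hw, mul_one, Real.norm_eq_abs, abs_mul, abs_of_pos hc]
  set a := ‖g ((((2*π)⁻¹ : ℝ) * q) • w)‖ with ha
  have ha0 : 0 ≤ a := norm_nonneg _
  have h0 : a ≤ C0 := hC0.2 _
  have h3 : ((2*π)⁻¹ * |q|)^3 * a ≤ C3 := by rw [← hnorm]; exact hC3.2 _
  have hpos : (0:ℝ) < (1+|q|)^(2:ℕ) := by positivity
  rw [← div_eq_mul_inv, le_div_iff₀ hpos]
  have key : |q| * (1+|q|)^(2:ℕ) ≤ 4 + 4*|q|^3 := by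
    nlinarith [abs_nonneg q, sq_nonneg (|q|-1), mul_nonneg (sq_nonneg (|q|-1)) (abs_nonneg q)]
  have h3' : |q|^3 * a ≤ (2*π)^3 * C3 := by
    have hq3 : |q|^3 * a = (2*π)^3 * (((2*π)⁻¹ * |q|)^3 * a) := by
      have hπ : (2*π) ≠ 0 := by positivity
      field_simp
    rw [hq3]
    have := mul_le_mul_of_nonneg_left h3 (by positivity : (0:ℝ) ≤ (2*π)^3)
    linarith
  calc |q| * a * (1+|q|)^(2:ℕ) = (|q| * (1+|q|)^(2:ℕ)) * a := by ring
    _ ≤ (4 + 4*|q|^3) * a := mul_le_mul_of_nonneg_right key ha0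
    _ = 4*a + 4*(|q|^3 * a) := by ring
    _ ≤ 4*C0 + 4*((2*π)^3*C3) := by linarith

theorem bound_integrable (M : ℝ) :
    Integrable (fun q : ℝ => M * ((1 + |q|) ^ (2:ℕ))⁻¹) := by
  have h1 : Integrable (fun q : ℝ => (1 + ‖q‖) ^ (-(2:ℝ))) := by
    apply integrable_one_add_norm (μ := volume)
    norm_num
  have h2 : ∀ q : ℝ, (1 + ‖q‖) ^ (-(2:ℝ)) = ((1 + |q|) ^ (2:ℕ))⁻¹ := by
    intro q
    rw [Real.norm_eq_abs, Real.rpow_neg (by positivity)]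
    norm_num
  simp only [h2] at h1
  exact h1.const_mul M

theorem line_integrand_norm (f : SchwartzMap E2 ℂ) (x : E2) (φ q : ℝ) :
    ‖q • h f x (q • omega φ)‖ = |q| * ‖gS f ((((2*π)⁻¹:ℝ) * q) • omega φ)‖ := by
  rw [norm_smul, Real.norm_eq_abs, h_norm, smul_smul]

theorem line_integrable (f : SchwartzMap E2 ℂ) (x : E2) (φ : ℝ) :
    Integrable (fun q : ℝ => q • h f x (q • omega φ)) := by
  obtain ⟨M, hM⟩ := decay_bound (gS f)
  apply (bound_integrable M).mono'
  · apply Continuous.aestronglyMeasurable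
    exact continuous_id.smul ((h_cont f x).comp (continuous_id.smul continuous_const))
  · refine ae_of_all _ fun q => ?_
    rw [line_integrand_norm]
    exact hM _ (omega_norm φ) q

/-- The measurable equivalence between `E2` and `ℝ × ℝ`. -/
def e2 : E2 ≃ᵐ ℝ × ℝ := (MeasurableEquiv.toLp 2 (Fin 2 → ℝ)).symm.trans MeasurableEquiv.finTwoArrow

theorem e2_mp : MeasurePreserving e2 volume volume :=
  (MeasureTheory.volume_preserving_finTwoArrow ℝ).comp
    (EuclideanSpace.volume_preserving_symm_measurableEquiv_toLp (Fin 2))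

theorem e2_symm_polar (p : ℝ × ℝ) : e2.symm (polarCoord.symm p) = p.1 • omega p.2 := by
  show (MeasurableEquiv.toLp 2 (Fin 2 → ℝ)).symm.symm (MeasurableEquiv.finTwoArrow.symm _) = _
  ext i
  fin_cases i <;>
    simp [e2, omega, MeasurableEquiv.finTwoArrow, polarCoord, MeasurableEquiv.coe_toLp,
      mul_comm]

theorem polar_step (h : E2 → ℂ) :
    (∫ η : E2, h η) = ∫ p in polarCoord.target, p.1 • h (p.1 • omega p.2) := by
  rw [← (MeasurePreserving.symm e2 e2_mp).integral_comp e2.symm.measurableEmbedding h,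
    ← integral_comp_polarCoord_symm (fun p => h (e2.symm p))]
  simp_rw [e2_symm_polar]

theorem integrableOn_polar (h : E2 → ℂ) (hh : Integrable h) :
    IntegrableOn (fun p : ℝ × ℝ => p.1 • h (p.1 • omega p.2)) polarCoord.target := by
  have B_det : ∀ p : ℝ × ℝ, (LinearMap.toContinuousLinearMap
      (Matrix.toLin (Module.Basis.finTwoProd ℝ) (Module.Basis.finTwoProd ℝ)
      !![Real.cos p.2, -p.1 * Real.sin p.2; Real.sin p.2, p.1 * Real.cos p.2])).det = p.1 := by
    intro p
    conv_rhs => rw [← one_mul p.1, ← cos_sq_add_sin_sq p.2]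
    simp only [neg_mul, LinearMap.det_toContinuousLinearMap, LinearMap.det_toLin,
      Matrix.det_fin_two_of, sub_neg_eq_add]
    ring
  have hcomp : Integrable (fun p : ℝ × ℝ => h (e2.symm p)) :=
    ((MeasurePreserving.symm e2 e2_mp).integrable_comp_emb e2.symm.measurableEmbedding).2 hh
  have h1 : IntegrableOn (fun p : ℝ × ℝ => h (e2.symm p)) (polarCoord.symm '' polarCoord.target) :=
    hcomp.integrableOn
  rw [integrableOn_image_iff_integrableOn_abs_det_fderiv_smul volume
    (polarCoord.open_target.measurableSet)
    (fun p _ => (hasFDerivAt_polarCoord_symm p).hasFDerivWithinAt)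
    polarCoord.symm.injOn (fun p => h (e2.symm p))] at h1
  apply h1.congr_fun ?_ polarCoord.open_target.measurableSet
  intro p hp
  simp only [B_det, e2_symm_polar]
  rw [det_fderivPolarCoordSymm, abs_of_pos hp.1]

theorem fubini_polar (h : E2 → ℂ) (hh : Integrable h) :
    (∫ p in polarCoord.target, p.1 • h (p.1 • omega p.2))
      = ∫ θ in Ioo (-π) π, ∫ r in Ioi (0:ℝ), r • h (r • omega θ) := by
  have hint := integrableOn_polar h hh
  have hswap : (polarCoord.target : Set (ℝ × ℝ)) = Prod.swap ⁻¹' (Ioo (-π) π ×ˢ Ioi (0:ℝ)) := by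
    rw [polarCoord_target]; ext p; simp [and_comm]
  have mp : MeasurePreserving (Prod.swap : ℝ × ℝ → ℝ × ℝ) volume volume :=
    Measure.measurePreserving_swap ..
  have hemb : MeasurableEmbedding (Prod.swap : ℝ × ℝ → ℝ × ℝ) :=
    MeasurableEquiv.prodComm.measurableEmbedding
  have key : (∫ p in polarCoord.target, p.1 • h (p.1 • omega p.2))
      = ∫ q in Ioo (-π) π ×ˢ Ioi (0:ℝ), q.2 • h (q.2 • omega q.1) := by
    rw [hswap, ← mp.setIntegral_preimage_emb hemb (fun q : ℝ × ℝ => q.2 • h (q.2 • omega q.1))]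
    rfl
  rw [key, Measure.volume_eq_prod, setIntegral_prod]
  · rw [hswap, ← mp.integrableOn_comp_preimage hemb] at hint
    rw [← Measure.volume_eq_prod]
    exact hint

/-- The half-line integral `K(θ) = ∫_0^∞ r h(r ω(θ)) dr`. -/
def K (f : SchwartzMap E2 ℂ) (x : E2) (θ : ℝ) : ℂ :=
  ∫ r in Ioi (0:ℝ), r • h f x (r • omega θ)

theorem K_periodic (f : SchwartzMap E2 ℂ) (x : E2) : Function.Periodic (K f x) (2*π) := by
  intro θ
  unfold K
  simp_rw [omega_periodic θ]

theorem K_meas (f : SchwartzMap E2 ℂ) (x : E2) : StronglyMeasurable (K f x) := by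
  have hF : Continuous (fun p : ℝ × ℝ => p.2 • h f x (p.2 • omega p.1)) := by
    exact continuous_snd.smul ((h_cont f x).comp
      (continuous_snd.smul (omega_cont.comp continuous_fst)))
  exact StronglyMeasurable.integral_prod_right
    (f := fun θ r => r • h f x (r • omega θ)) hF.stronglyMeasurable

theorem K_bound (f : SchwartzMap E2 ℂ) (x : E2) :
    ∃ C : ℝ, ∀ θ : ℝ, ‖K f x θ‖ ≤ C := by
  obtain ⟨M, hM⟩ := decay_bound (gS f)
  refine ⟨∫ q : ℝ, M * ((1 + |q|) ^ (2:ℕ))⁻¹, fun θ => ?_⟩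
  calc ‖K f x θ‖ ≤ ∫ r in Ioi (0:ℝ), ‖r • h f x (r • omega θ)‖ :=
        norm_integral_le_integral_norm _
    _ ≤ ∫ r in Ioi (0:ℝ), M * ((1 + |r|) ^ (2:ℕ))⁻¹ := by
        apply setIntegral_mono_on
        · exact ((line_integrable f x θ).norm).integrableOn
        · exact (bound_integrable M).integrableOn
        · exact measurableSet_Ioi
        · intro r _
          rw [line_integrand_norm]
          exact hM _ (omega_norm θ) r
    _ ≤ ∫ q : ℝ, M * ((1 + |q|) ^ (2:ℕ))⁻¹ := by
        apply setIntegral_le_integral (bound_integrable M)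
        refine ae_of_all _ fun q => ?_
        have hM0 : 0 ≤ M := by
          have h0 := hM (omega 0) (omega_norm 0) 0
          simpa using h0.trans' (by positivity)
        positivity

theorem K_ii (f : SchwartzMap E2 ℂ) (x : E2) (a b : ℝ) :
    IntervalIntegrable (K f x) volume a b := by
  obtain ⟨C, hC⟩ := K_bound f x
  rw [intervalIntegrable_iff]
  apply Integrable.mono' (g := fun _ => C)
  · exact integrableOn_const measure_Ioc_lt_top.ne
  · exact (K_meas f x).aestronglyMeasurable.restrict
  · exact ae_of_all _ fun θ => hC θ


theorem line_integrable_abs (f : SchwartzMap E2 ℂ) (x : E2) (φ : ℝ) :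
    Integrable (fun q : ℝ => |q| • h f x (q • omega φ)) := by
  obtain ⟨M, hM⟩ := decay_bound (gS f)
  apply (bound_integrable M).mono'
  · apply Continuous.aestronglyMeasurable
    exact (continuous_abs).smul ((h_cont f x).comp (continuous_id.smul continuous_const))
  · refine ae_of_all _ fun q => ?_
    rw [norm_smul, Real.norm_eq_abs, abs_abs, h_norm, smul_smul]
    exact hM _ (omega_norm φ) q

theorem J_eq (f : SchwartzMap E2 ℂ) (x : E2) (φ : ℝ) :
    (∫ q : ℝ, Complex.exp (Complex.I * ((⟪x, omega φ⟫ : ℝ) : ℂ) * (q : ℂ)) * ((|q| : ℝ) : ℂ)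
        * FT ⇑f (q • omega φ))
      = K f x φ + K f x (φ + π) := by
  have hpt : ∀ q : ℝ, Complex.exp (Complex.I * ((⟪x, omega φ⟫ : ℝ) : ℂ) * (q : ℂ))
      * ((|q| : ℝ) : ℂ) * FT ⇑f (q • omega φ) = |q| • h f x (q • omega φ) := by
    intro q
    rw [h_eq, Complex.real_smul, real_inner_smul_left, real_inner_comm]
    push_cast
    ring_nf
  simp only [hpt]
  have hsplit : (∫ q in Iic (0:ℝ), |q| • h f x (q • omega φ))
      + (∫ q in Ioi (0:ℝ), |q| • h f x (q • omega φ))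
      = ∫ q : ℝ, |q| • h f x (q • omega φ) :=
    integral_Iic_add_Ioi (line_integrable_abs f x φ).integrableOn
      (line_integrable_abs f x φ).integrableOn
  rw [← hsplit]
  have hpos : (∫ q in Ioi (0:ℝ), |q| • h f x (q • omega φ)) = K f x φ := by
    apply setIntegral_congr_fun measurableSet_Ioi
    intro q hq
    dsimp only
    rw [abs_of_pos hq]
  have hneg : (∫ q in Iic (0:ℝ), |q| • h f x (q • omega φ)) = K f x (φ + π) := by
    have hcomp := integral_comp_neg_Ioi (0:ℝ) (fun q => |q| • h f x (q • omega φ))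
    rw [neg_zero] at hcomp
    rw [← hcomp]
    apply setIntegral_congr_fun measurableSet_Ioi
    intro q hq
    simp only [abs_neg, abs_of_pos (Set.mem_Ioi.mp hq), neg_smul, smul_neg]
    rw [omega_add_pi, smul_neg]
  rw [hpos, hneg, add_comm]

end FBP

open FBP in
/-- Filtered backprojection inversion formula:
`f(x) = ∫_0^{2π} G_f(ω(φ), x·ω(φ)) dφ`. -/
theorem filtered_backprojection (f : SchwartzMap E2 ℂ) (x : E2) :
    f x = ∫ φ in (0:ℝ)..(2 * π), filtProj (⇑f) (omega φ) ⟪x, omega φ⟫ := by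
  have hπ : (0:ℝ) < π := pi_pos
  have hA : (∫ θ in (0:ℝ)..(2*π), K f x θ) = ((4*π^2 : ℝ) : ℂ) * f x := by
    have h1 : (∫ η : E2, h f x η) = ∫ θ in Set.Ioo (-π) π, K f x θ := by
      rw [polar_step (h f x), fubini_polar (h f x) (h_integrable f x)]; rfl
    have h2 : (∫ θ in Set.Ioo (-π) π, K f x θ) = ∫ θ in (-π)..π, K f x θ := by
      rw [intervalIntegral.integral_of_le (by linarith : (-π) ≤ π),
        integral_Ioc_eq_integral_Ioo]
    have h3 : (∫ θ in (-π)..π, K f x θ) = ∫ θ in (0:ℝ)..(2*π), K f x θ := by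
      have := (K_periodic f x).intervalIntegral_add_eq (-π) 0
      rw [show (-π) + 2*π = π by ring, zero_add] at this
      exact this
    rw [← h3, ← h2, ← h1, inversion]
  have hJ : ∀ φ : ℝ, filtProj (⇑f) (omega φ) ⟪x, omega φ⟫
      = (1 / (8 * (π:ℂ)^2)) * (K f x φ + K f x (φ + π)) := by
    intro φ
    rw [filtProj, ← J_eq f x φ]
  have hshift : IntervalIntegrable (fun φ => K f x (φ+π)) volume 0 (2*π) := by
    have := (K_ii f x π (3*π)).comp_add_right π
    rw [show π - π = 0 by ring, show 3*π - π = 2*π by ring] at this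
    exact this
  have hKshift : (∫ φ in (0:ℝ)..(2*π), K f x (φ + π)) = ∫ θ in (0:ℝ)..(2*π), K f x θ := by
    rw [intervalIntegral.integral_comp_add_right (fun θ => K f x θ) π, zero_add]
    have := (K_periodic f x).intervalIntegral_add_eq π 0
    rw [zero_add] at this
    rw [show 2*π + π = π + 2*π by ring]
    exact this
  calc f x = (1 / (8 * (π:ℂ)^2)) * (((4*π^2 : ℝ) : ℂ) * f x + ((4*π^2 : ℝ) : ℂ) * f x) := by
        have hπc : (π:ℂ) ≠ 0 := Complex.ofReal_ne_zero.2 pi_ne_zero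
        push_cast
        field_simp
        ring
    _ = (1 / (8 * (π:ℂ)^2)) * ((∫ θ in (0:ℝ)..(2*π), K f x θ)
          + ∫ φ in (0:ℝ)..(2*π), K f x (φ + π)) := by rw [hKshift, hA]
    _ = (1 / (8 * (π:ℂ)^2)) * ∫ φ in (0:ℝ)..(2*π), (K f x φ + K f x (φ + π)) := by
        rw [intervalIntegral.integral_add (K_ii f x 0 (2*π)) hshift]
    _ = ∫ φ in (0:ℝ)..(2*π), (1 / (8 * (π:ℂ)^2)) * (K f x φ + K f x (φ + π)) := by
        rw [intervalIntegral.integral_const_mul]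
    _ = ∫ φ in (0:ℝ)..(2 * π), filtProj (⇑f) (omega φ) ⟪x, omega φ⟫ := by
        simp_rw [hJ]
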